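/- Let D = (0,L)×(0,B), f ∈ H⁴(D) ∩ H^1_0(D) satisfying the boundary conditions f|_{∂D} = f_{yy}(x,0) = f_{yy}(x,B) = f_x(0,y) = f_x(L,y) = f_{xx}(L,y) = 0, and let a = π²/L² + π²/B². Then a²‖Δf‖²_{L²(D)} ≤ ‖Δ²f‖²_{L²(D)}. -/

import Mathlib

open MeasureTheory Set

/-- The Laplacian of a curried function of two real variables. -/
noncomputable def lap (u : ℝ → ℝ → ℝ) : ℝ → ℝ → ℝ :=
  fun x y => iteratedDeriv 2 (fun s => u s y) x + iteratedDeriv 2 (u x) y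

namespace BilapAux

open Function intervalIntegral Real Filter Topology

/-! ### Partial derivatives of curried functions -/

noncomputable def px (u : ℝ → ℝ → ℝ) : ℝ → ℝ → ℝ := fun x y => deriv (fun s => u s y) x
noncomputable def py (u : ℝ → ℝ → ℝ) : ℝ → ℝ → ℝ := fun x y => deriv (u x) y

lemma px_eq_fderiv {u : ℝ → ℝ → ℝ} (h : Differentiable ℝ (uncurry u)) (x y : ℝ) :
    px u x y = fderiv ℝ (uncurry u) (x, y) (1, 0) := by
  have hc : HasDerivAt (fun s : ℝ => (s, y)) ((1 : ℝ), (0 : ℝ)) x :=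
    (hasDerivAt_id x).prodMk (hasDerivAt_const x y)
  exact ((h (x, y)).hasFDerivAt.comp_hasDerivAt x hc).deriv

lemma py_eq_fderiv {u : ℝ → ℝ → ℝ} (h : Differentiable ℝ (uncurry u)) (x y : ℝ) :
    py u x y = fderiv ℝ (uncurry u) (x, y) (0, 1) := by
  have hc : HasDerivAt (fun t : ℝ => (x, t)) ((0 : ℝ), (1 : ℝ)) y :=
    (hasDerivAt_const y x).prodMk (hasDerivAt_id y)
  exact ((h (x, y)).hasFDerivAt.comp_hasDerivAt y hc).deriv

lemma contDiff_px {n : ℕ} {u : ℝ → ℝ → ℝ} (h : ContDiff ℝ (n + 1 : ℕ) (uncurry u)) :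
    ContDiff ℝ n (uncurry (px u)) := by
  have hd : Differentiable ℝ (uncurry u) :=
    h.differentiable (by simp)
  have h1 : ContDiff ℝ n (fun p : ℝ × ℝ => fderiv ℝ (uncurry u) p (1, 0)) :=
    (h.fderiv_right (by exact_mod_cast le_refl _)).clm_apply contDiff_const
  have he : uncurry (px u) = fun p : ℝ × ℝ => fderiv ℝ (uncurry u) p (1, 0) := by
    funext p; exact px_eq_fderiv hd p.1 p.2
  rw [he]; exact h1

lemma contDiff_py {n : ℕ} {u : ℝ → ℝ → ℝ} (h : ContDiff ℝ (n + 1 : ℕ) (uncurry u)) :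
    ContDiff ℝ n (uncurry (py u)) := by
  have hd : Differentiable ℝ (uncurry u) :=
    h.differentiable (by simp)
  have h1 : ContDiff ℝ n (fun p : ℝ × ℝ => fderiv ℝ (uncurry u) p (0, 1)) :=
    (h.fderiv_right (by exact_mod_cast le_refl _)).clm_apply contDiff_const
  have he : uncurry (py u) = fun p : ℝ × ℝ => fderiv ℝ (uncurry u) p (0, 1) := by
    funext p; exact py_eq_fderiv hd p.1 p.2
  rw [he]; exact h1

lemma contDiff_slice_x {n : WithTop ℕ∞} {u : ℝ → ℝ → ℝ} (h : ContDiff ℝ n (uncurry u)) (y : ℝ) :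
    ContDiff ℝ n (fun x => u x y) :=
  h.comp (contDiff_id.prodMk contDiff_const)

lemma contDiff_slice_y {n : WithTop ℕ∞} {u : ℝ → ℝ → ℝ} (h : ContDiff ℝ n (uncurry u)) (x : ℝ) :
    ContDiff ℝ n (u x) :=
  h.comp (contDiff_const.prodMk contDiff_id)

lemma iteratedDeriv_two (w : ℝ → ℝ) : iteratedDeriv 2 w = deriv (deriv w) := by
  rw [show (2:ℕ) = 1 + 1 from rfl, iteratedDeriv_succ, iteratedDeriv_one]

lemma lap_eq (u : ℝ → ℝ → ℝ) : lap u = fun x y => px (px u) x y + py (py u) x y := by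
  funext x y
  rw [lap, iteratedDeriv_two, iteratedDeriv_two]
  rfl

/-! ### Integrability and Fubini on the rectangle -/

variable {L B : ℝ}

lemma intgD (hL : 0 < L) (hB : 0 < B) {F : ℝ → ℝ → ℝ} (hF : Continuous (uncurry F)) :
    IntegrableOn (fun p : ℝ × ℝ => F p.1 p.2) (Ioo 0 L ×ˢ Ioo 0 B) := by
  have hcpt : IsCompact (Icc (0:ℝ) L ×ˢ Icc (0:ℝ) B) := isCompact_Icc.prod isCompact_Icc
  have h1 : IntegrableOn (fun p : ℝ × ℝ => F p.1 p.2) (Icc (0:ℝ) L ×ˢ Icc (0:ℝ) B) :=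
    hF.continuousOn.integrableOn_compact hcpt
  exact h1.mono_set (prod_mono Ioo_subset_Icc_self Ioo_subset_Icc_self)

lemma intgD_Ioc (hL : 0 < L) (hB : 0 < B) {F : ℝ → ℝ → ℝ} (hF : Continuous (uncurry F)) :
    Integrable (fun p : ℝ × ℝ => F p.1 p.2)
      ((volume.restrict (Ioc 0 L)).prod (volume.restrict (Ioc 0 B))) := by
  rw [Measure.prod_restrict]
  have hcpt : IsCompact (Icc (0:ℝ) L ×ˢ Icc (0:ℝ) B) := isCompact_Icc.prod isCompact_Icc
  have h1 : IntegrableOn (fun p : ℝ × ℝ => F p.1 p.2) (Icc (0:ℝ) L ×ˢ Icc (0:ℝ) B)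
      (volume.prod volume) := by
    rw [← Measure.volume_eq_prod]
    exact hF.continuousOn.integrableOn_compact hcpt
  exact h1.mono_set (prod_mono Ioc_subset_Icc_self Ioc_subset_Icc_self)

lemma fub_xy (hL : 0 < L) (hB : 0 < B) {F : ℝ → ℝ → ℝ} (hF : Continuous (uncurry F)) :
    ∫ p in Ioo 0 L ×ˢ Ioo 0 B, F p.1 p.2 = ∫ x in (0:ℝ)..L, ∫ y in (0:ℝ)..B, F x y := by
  have hint : IntegrableOn (fun p : ℝ × ℝ => F p.1 p.2) (Ioo 0 L ×ˢ Ioo 0 B)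
      (volume.prod volume) := by
    rw [← Measure.volume_eq_prod]; exact intgD hL hB hF
  rw [Measure.volume_eq_prod, setIntegral_prod _ hint]
  rw [intervalIntegral.integral_of_le hL.le]
  rw [setIntegral_congr_set Ioo_ae_eq_Ioc]
  apply setIntegral_congr_fun measurableSet_Ioc
  intro x _
  show ∫ y in Ioo (0:ℝ) B, F x y = ∫ y in (0:ℝ)..B, F x y
  rw [intervalIntegral.integral_of_le hB.le, integral_Ioc_eq_integral_Ioo]

lemma fub_yx (hL : 0 < L) (hB : 0 < B) {F : ℝ → ℝ → ℝ} (hF : Continuous (uncurry F)) :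
    ∫ p in Ioo 0 L ×ˢ Ioo 0 B, F p.1 p.2 = ∫ y in (0:ℝ)..B, ∫ x in (0:ℝ)..L, F x y := by
  have hint : Integrable (fun p : ℝ × ℝ => F p.1 p.2)
      ((volume.restrict (Ioo 0 L)).prod (volume.restrict (Ioo 0 B))) := by
    rw [Measure.prod_restrict, ← Measure.volume_eq_prod]; exact intgD hL hB hF
  rw [Measure.volume_eq_prod, ← Measure.prod_restrict]
  rw [integral_prod_symm _ hint]
  rw [intervalIntegral.integral_of_le hB.le]
  rw [setIntegral_congr_set Ioo_ae_eq_Ioc]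
  apply setIntegral_congr_fun measurableSet_Ioc
  intro y _
  show ∫ x in Ioo (0:ℝ) L, F x y = ∫ x in (0:ℝ)..L, F x y
  rw [intervalIntegral.integral_of_le hL.le, integral_Ioc_eq_integral_Ioo]

lemma marg_x (hL : 0 < L) (hB : 0 < B) {F : ℝ → ℝ → ℝ} (hF : Continuous (uncurry F)) :
    IntervalIntegrable (fun x => ∫ y in (0:ℝ)..B, F x y) volume 0 L := by
  rw [intervalIntegrable_iff_integrableOn_Ioc_of_le hL.le]
  have h := (intgD_Ioc hL hB hF).integral_prod_left
  have he : (fun x => ∫ y in (0:ℝ)..B, F x y) = fun x => ∫ y in Ioc (0:ℝ) B, F x y := by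
    funext x; rw [intervalIntegral.integral_of_le hB.le]
  rw [he]
  exact h

lemma marg_y (hL : 0 < L) (hB : 0 < B) {F : ℝ → ℝ → ℝ} (hF : Continuous (uncurry F)) :
    IntervalIntegrable (fun y => ∫ x in (0:ℝ)..L, F x y) volume 0 B := by
  rw [intervalIntegrable_iff_integrableOn_Ioc_of_le hB.le]
  have h := (intgD_Ioc hL hB hF).integral_prod_right
  have he : (fun y => ∫ x in (0:ℝ)..L, F x y) = fun y => ∫ x in Ioc (0:ℝ) L, F x y := by
    funext y; rw [intervalIntegral.integral_of_le hL.le]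
  rw [he]
  exact h

/-! ### Cauchy–Schwarz and integration by parts -/

lemma integral_CS {α : Type*} [MeasurableSpace α] (μ : Measure α) {f g : α → ℝ}
    (hf : Integrable (fun x => f x ^ 2) μ) (hg : Integrable (fun x => g x ^ 2) μ)
    (hfg : Integrable (fun x => f x * g x) μ) :
    (∫ x, f x * g x ∂μ) ^ 2 ≤ (∫ x, f x ^ 2 ∂μ) * ∫ x, g x ^ 2 ∂μ := by
  have key : ∀ t : ℝ, 0 ≤ (∫ x, f x ^ 2 ∂μ) * (t * t) + (2 * ∫ x, f x * g x ∂μ) * t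
      + ∫ x, g x ^ 2 ∂μ := by
    intro t
    have h2 : (0:ℝ) ≤ ∫ x, (t * f x + g x) ^ 2 ∂μ := integral_nonneg fun x => sq_nonneg _
    have h3 : ∫ x, (t * f x + g x) ^ 2 ∂μ
        = (∫ x, f x ^ 2 ∂μ) * (t * t) + (2 * ∫ x, f x * g x ∂μ) * t + ∫ x, g x ^ 2 ∂μ := by
      have he : (fun x => (t * f x + g x) ^ 2)
          = fun x => t ^ 2 * f x ^ 2 + 2 * t * (f x * g x) + g x ^ 2 := by
        funext x; ring
      rw [he]
      have e1 : ∫ x, (t ^ 2 * f x ^ 2 + 2 * t * (f x * g x)) + g x ^ 2 ∂μ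
          = (∫ x, t ^ 2 * f x ^ 2 + 2 * t * (f x * g x) ∂μ) + ∫ x, g x ^ 2 ∂μ :=
        integral_add ((hf.const_mul _).add (hfg.const_mul _)) hg
      have e2 : ∫ x, t ^ 2 * f x ^ 2 + 2 * t * (f x * g x) ∂μ
          = (∫ x, t ^ 2 * f x ^ 2 ∂μ) + ∫ x, 2 * t * (f x * g x) ∂μ :=
        integral_add (hf.const_mul _) (hfg.const_mul _)
      rw [e1, e2, MeasureTheory.integral_const_mul, MeasureTheory.integral_const_mul]
      ring
    linarith [h3 ▸ h2]
  have hd := discrim_le_zero key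
  rw [discrim] at hd
  nlinarith [hd]

lemma ibp1 {a b : ℝ} {u v : ℝ → ℝ} (hu : ContDiff ℝ 1 u) (hv : ContDiff ℝ 1 v)
    (hb : u b * v b - u a * v a = 0) :
    ∫ x in a..b, u x * deriv v x = - ∫ x in a..b, deriv u x * v x := by
  rw [intervalIntegral.integral_mul_deriv_eq_deriv_mul
    (fun x _ => ((hu.differentiable one_ne_zero) x).hasDerivAt)
    (fun x _ => ((hv.differentiable one_ne_zero) x).hasDerivAt)
    ((hu.continuous_deriv le_rfl).intervalIntegrable _ _)
    ((hv.continuous_deriv le_rfl).intervalIntegrable _ _), hb, zero_sub]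

lemma contDiff_deriv_of_two {u : ℝ → ℝ} (hu : ContDiff ℝ 2 u) : ContDiff ℝ 1 (deriv u) := by
  rw [show (2 : WithTop ℕ∞) = 1 + 1 by norm_num] at hu
  exact (contDiff_succ_iff_deriv.mp hu).2.2

lemma ibp2 {a b : ℝ} {u v : ℝ → ℝ} (hu : ContDiff ℝ 2 u) (hv : ContDiff ℝ 2 v)
    (hb1 : u b * deriv v b - u a * deriv v a = 0)
    (hb2 : deriv u b * v b - deriv u a * v a = 0) :
    ∫ x in a..b, u x * deriv (deriv v) x = ∫ x in a..b, deriv (deriv u) x * v x := by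
  have hu1 : ContDiff ℝ 1 u := hu.of_le (by norm_num)
  have hv1 : ContDiff ℝ 1 v := hv.of_le (by norm_num)
  have hdu := contDiff_deriv_of_two hu
  have hdv := contDiff_deriv_of_two hv
  have h1 : ∫ x in a..b, u x * deriv (deriv v) x = - ∫ x in a..b, deriv u x * deriv v x :=
    ibp1 hu1 hdv hb1
  have hb2' : v b * deriv u b - v a * deriv u a = 0 := by
    rw [mul_comm (v b), mul_comm (v a)]; exact hb2
  have h2 : ∫ x in a..b, v x * deriv (deriv u) x = - ∫ x in a..b, deriv v x * deriv u x :=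
    ibp1 hv1 hdu hb2'
  rw [h1]
  have h3 : ∫ x in a..b, deriv (deriv u) x * v x = ∫ x in a..b, v x * deriv (deriv u) x := by
    apply intervalIntegral.integral_congr; intro x _; ring
  have h4 : ∫ x in a..b, deriv v x * deriv u x = ∫ x in a..b, deriv u x * deriv v x := by
    apply intervalIntegral.integral_congr; intro x _; ring
  rw [h3, h2, h4]

/-! ### Wirtinger -/

lemma alg1 (s co d v k' : ℝ) (hs : s ≠ 0) (h : s^2 + co^2 = 1) :
    d^2 - k'^2*v^2 = (d - k'*v*(co/s))^2 + (2*k'*v*d*(co/s) - k'^2*v^2/s^2) := by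
  field_simp
  linear_combination (-(k'^2*v^2)) * h

lemma alg2 (s co d v k' : ℝ) (hs : s ≠ 0) (h : s^2 + co^2 = 1) :
    2*k'*v*d*(co/s) - k'^2*v^2/s^2 = k'*(2*v*d)*(co/s) + k'*v^2*((-s*k'*s - co*(co*k'))/s^2) := by
  field_simp
  linear_combination (k'^2*v^2) * h

/-- Sharp 1D Poincaré (Wirtinger) inequality on `[0,c]` with Dirichlet BC. -/
lemma wirtinger1d {c : ℝ} (hc : 0 < c) {u : ℝ → ℝ} (hu : ContDiff ℝ 1 u)
    (h0 : u 0 = 0) (hcc : u c = 0) :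
    (Real.pi / c) ^ 2 * ∫ x in (0:ℝ)..c, (u x) ^ 2 ≤ ∫ x in (0:ℝ)..c, (deriv u x) ^ 2 := by
  obtain ⟨k, hk⟩ : ∃ k : ℝ, k = Real.pi / c := ⟨_, rfl⟩
  rw [← hk]
  have hkpos : 0 < k := hk ▸ div_pos Real.pi_pos hc
  have hkc : k * c = Real.pi := by rw [hk]; field_simp
  have hu' : ∀ x, HasDerivAt u (deriv u x) x := fun x => ((hu.differentiable one_ne_zero) x).hasDerivAt
  have hcont_u : Continuous u := hu.continuous
  have hcont_du : Continuous (deriv u) := hu.continuous_deriv le_rfl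
  obtain ⟨C, hC⟩ : ∃ C, ∀ x ∈ Icc (0:ℝ) c, ‖deriv u x‖ ≤ C :=
    (isCompact_Icc.exists_bound_of_continuousOn hcont_du.continuousOn)
  have hC0 : 0 ≤ C := le_trans (norm_nonneg _) (hC 0 ⟨le_rfl, hc.le⟩)
  have hlip : ∀ x ∈ Icc (0:ℝ) c, ∀ y ∈ Icc (0:ℝ) c, ‖u x - u y‖ ≤ C * ‖x - y‖ := by
    intro x hx y hy
    exact (convex_Icc (0:ℝ) c).norm_image_sub_le_of_norm_deriv_le
      (fun z _ => (hu.differentiable one_ne_zero) z) (fun z hz => hC z hz) hy hx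
  obtain ⟨G, hG⟩ : ∃ G : ℝ → ℝ, G = fun x => (deriv u x) ^ 2 - k ^ 2 * (u x) ^ 2 := ⟨_, rfl⟩
  have hGcont : Continuous G := by rw [hG]; fun_prop
  obtain ⟨Φ, hΦdef⟩ : ∃ Φ : ℝ → ℝ, Φ = fun t => ∫ x in (0:ℝ)..t, G x := ⟨_, rfl⟩
  have hΦ : Continuous Φ := by
    rw [hΦdef]
    exact intervalIntegral.continuous_primitive (fun a b => hGcont.intervalIntegrable a b) 0
  obtain ⟨W, hW⟩ : ∃ W : ℝ → ℝ,
      W = fun x => k * u x ^ 2 * (Real.cos (k*x) / Real.sin (k*x)) := ⟨_, rfl⟩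
  have key : ∀ ε : ℝ, 0 < ε → ε ≤ c/2 → W (c-ε) - W ε ≤ Φ (c-ε) - Φ ε := by
    intro ε hε hε2
    have hεle : ε ≤ c - ε := by linarith
    have hsin : ∀ x ∈ Icc ε (c-ε), 0 < Real.sin (k*x) := by
      intro x hx
      apply Real.sin_pos_of_pos_of_lt_pi
      · exact mul_pos hkpos (lt_of_lt_of_le hε hx.1)
      · have hxc : x < c := by linarith [hx.2]
        calc k * x < k * c := mul_lt_mul_of_pos_left hxc hkpos
        _ = Real.pi := hkc
    have huIcc : uIcc ε (c-ε) = Icc ε (c-ε) := uIcc_of_le hεle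
    have hWd : ∀ x ∈ Icc ε (c-ε), HasDerivAt W
        (2*k*u x*deriv u x*(Real.cos (k*x)/Real.sin (k*x)) - k^2*u x^2/(Real.sin (k*x))^2) x := by
      intro x hx
      have hsx := (hsin x hx).ne'
      have h1 : HasDerivAt (fun x => k * u x ^ 2) (k * (2 * u x * deriv u x)) x := by
        simpa [mul_comm] using (((hu' x).pow 2).const_mul k)
      have hkx : HasDerivAt (fun x : ℝ => k * x) k x := by
        simpa using (hasDerivAt_id x).const_mul k
      have hsinx : HasDerivAt (fun x => Real.sin (k*x)) (Real.cos (k*x) * k) x := by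
        exact (Real.hasDerivAt_sin (k*x)).comp x hkx
      have hcosx : HasDerivAt (fun x => Real.cos (k*x)) (-Real.sin (k*x) * k) x := by
        exact (Real.hasDerivAt_cos (k*x)).comp x hkx
      have hdiv := hcosx.div hsinx hsx
      have hmul := h1.mul hdiv
      rw [hW]
      exact hmul.congr_deriv (alg2 _ _ _ _ _ hsx (Real.sin_sq_add_cos_sq (k*x))).symm
    have hpt : ∀ x ∈ Icc ε (c-ε), G x =
        (deriv u x - k * u x * (Real.cos (k*x)/Real.sin (k*x)))^2 +
        (2*k*u x*deriv u x*(Real.cos (k*x)/Real.sin (k*x)) - k^2*u x^2/(Real.sin (k*x))^2) := by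
      intro x hx
      rw [hG]
      exact alg1 _ _ _ _ _ (hsin x hx).ne' (Real.sin_sq_add_cos_sq (k*x))
    have hconsin : ContinuousOn (fun x => Real.sin (k*x)) (Icc ε (c-ε)) := by fun_prop
    have hconcot : ContinuousOn (fun x => Real.cos (k*x)/Real.sin (k*x)) (Icc ε (c-ε)) := by
      apply ContinuousOn.div (by fun_prop) hconsin
      intro x hx; exact (hsin x hx).ne'
    have hconW' : ContinuousOn (fun x =>
        2*k*u x*deriv u x*(Real.cos (k*x)/Real.sin (k*x)) - k^2*u x^2/(Real.sin (k*x))^2)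
        (Icc ε (c-ε)) := by
      apply ContinuousOn.sub
      · exact (by fun_prop : ContinuousOn (fun x => 2*k*u x*deriv u x) _).mul hconcot
      · apply ContinuousOn.div (by fun_prop) (by fun_prop)
        intro x hx; exact pow_ne_zero 2 (hsin x hx).ne'
    have hconSq : ContinuousOn
        (fun x => (deriv u x - k * u x * (Real.cos (k*x)/Real.sin (k*x)))^2) (Icc ε (c-ε)) := by
      apply ContinuousOn.pow
      exact (hcont_du.continuousOn).sub
        ((by fun_prop : ContinuousOn (fun x => k * u x) _).mul hconcot)
    have hintW' : IntervalIntegrable (fun x =>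
        2*k*u x*deriv u x*(Real.cos (k*x)/Real.sin (k*x)) - k^2*u x^2/(Real.sin (k*x))^2)
        volume ε (c-ε) := (hconW'.mono (by rw [huIcc])).intervalIntegrable
    have hintSq : IntervalIntegrable
        (fun x => (deriv u x - k * u x * (Real.cos (k*x)/Real.sin (k*x)))^2)
        volume ε (c-ε) := (hconSq.mono (by rw [huIcc])).intervalIntegrable
    have hFTC : ∫ x in ε..(c-ε), (2*k*u x*deriv u x*(Real.cos (k*x)/Real.sin (k*x))
        - k^2*u x^2/(Real.sin (k*x))^2) = W (c-ε) - W ε := by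
      apply intervalIntegral.integral_eq_sub_of_hasDerivAt
      · intro x hx; exact hWd x (huIcc ▸ hx)
      · exact hintW'
    have hsplit : ∫ x in ε..(c-ε), G x =
        (∫ x in ε..(c-ε), (deriv u x - k * u x * (Real.cos (k*x)/Real.sin (k*x)))^2) +
        ∫ x in ε..(c-ε), (2*k*u x*deriv u x*(Real.cos (k*x)/Real.sin (k*x))
          - k^2*u x^2/(Real.sin (k*x))^2) := by
      rw [← intervalIntegral.integral_add hintSq hintW']
      apply intervalIntegral.integral_congr
      intro x hx
      exact hpt x (huIcc ▸ hx)
    have hsqnn : 0 ≤ ∫ x in ε..(c-ε),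
        (deriv u x - k * u x * (Real.cos (k*x)/Real.sin (k*x)))^2 :=
      intervalIntegral.integral_nonneg hεle (fun x _ => sq_nonneg _)
    have hΦdiff : Φ (c-ε) - Φ ε = ∫ x in ε..(c-ε), G x := by
      rw [hΦdef]
      exact intervalIntegral.integral_interval_sub_left
        (hGcont.intervalIntegrable 0 (c-ε)) (hGcont.intervalIntegrable 0 ε)
    rw [hΦdiff, hsplit, hFTC]
    linarith
  have hWbound : ∀ ε : ℝ, 0 < ε → ε ≤ c/2 → -(Real.pi * C^2 * ε) ≤ W (c-ε) - W ε := by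
    intro ε hε hε2
    have hsinε : 0 < Real.sin (k*ε) := by
      apply Real.sin_pos_of_pos_of_lt_pi (mul_pos hkpos hε)
      calc k * ε ≤ k * (c/2) := mul_le_mul_of_nonneg_left hε2 hkpos.le
      _ < k * c := by nlinarith
      _ = Real.pi := hkc
    have hjordan : 2/Real.pi * (k*ε) ≤ Real.sin (k*ε) := by
      apply Real.mul_le_sin (mul_pos hkpos hε).le
      calc k * ε ≤ k * (c/2) := mul_le_mul_of_nonneg_left hε2 hkpos.le
      _ = Real.pi/2 := by rw [hk]; field_simp
    have hsinlb : k*ε*(2/Real.pi) ≤ Real.sin (k*ε) := by linarith [hjordan]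
    have huε : |u ε| ≤ C * ε := by
      have h := hlip ε ⟨hε.le, by linarith⟩ 0 ⟨le_rfl, hc.le⟩
      rw [h0, sub_zero, sub_zero] at h
      simpa [abs_of_pos hε] using h
    have hucε : |u (c-ε)| ≤ C * ε := by
      have h := hlip (c-ε) ⟨by linarith, by linarith⟩ c ⟨hc.le, le_rfl⟩
      rw [hcc, sub_zero] at h
      have : ‖(c-ε) - c‖ = ε := by
        rw [Real.norm_eq_abs, show (c-ε) - c = -ε by ring, abs_neg, abs_of_pos hε]
      rw [this] at h
      simpa using h
    have hWabs : ∀ v : ℝ, |v| ≤ C * ε → ∀ co : ℝ, |co| ≤ 1 →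
        |k * v^2 * (co / Real.sin (k*ε))| ≤ Real.pi/2 * C^2 * ε := by
      intro v hv co hco
      have h1 : |k * v^2 * (co / Real.sin (k*ε))| = k * v^2 * |co| / Real.sin (k*ε) := by
        rw [abs_mul, abs_mul, abs_div, abs_of_pos hkpos, abs_of_pos hsinε,
          abs_of_nonneg (sq_nonneg v), mul_div_assoc]
      rw [h1]
      have hv2 : v^2 ≤ (C*ε)^2 := by
        calc v^2 = |v|^2 := (sq_abs v).symm
        _ ≤ (C*ε)^2 := by apply pow_le_pow_left₀ (abs_nonneg v) hv
      rw [div_le_iff₀ hsinε]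
      calc k * v^2 * |co| ≤ k * (C*ε)^2 * 1 := by
            apply mul_le_mul (by nlinarith [hkpos.le]) hco (abs_nonneg co) (by positivity)
      _ = k * C^2 * ε * ε := by ring
      _ ≤ (Real.pi/2 * C^2 * ε) * (k*ε*(2/Real.pi)) := by
            rw [show (Real.pi/2 * C^2 * ε) * (k*ε*(2/Real.pi))
              = k * C^2 * ε * ε * (Real.pi/2 * (2/Real.pi)) by ring]
            have hone : Real.pi/2 * (2/Real.pi) = 1 := by
              field_simp
            rw [hone, mul_one]
      _ ≤ (Real.pi/2 * C^2 * ε) * Real.sin (k*ε) := by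
            apply mul_le_mul_of_nonneg_left hsinlb (by positivity)
    have hWε : |W ε| ≤ Real.pi/2 * C^2 * ε := by
      rw [hW]
      exact hWabs (u ε) huε _ (Real.abs_cos_le_one _)
    have hWcε : |W (c-ε)| ≤ Real.pi/2 * C^2 * ε := by
      have hsid : Real.sin (k*(c-ε)) = Real.sin (k*ε) := by
        rw [show k*(c-ε) = Real.pi - k*ε by rw [mul_sub, hkc]]
        exact Real.sin_pi_sub _
      have hWv : W (c-ε) = k * u (c-ε)^2 * (Real.cos (k*(c-ε)) / Real.sin (k*ε)) := by
        rw [hW]; simp only; rw [hsid]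
      rw [hWv]
      exact hWabs (u (c-ε)) hucε _ (Real.abs_cos_le_one _)
    have h1 := abs_le.mp hWε
    have h2 := abs_le.mp hWcε
    linarith [h1.1, h1.2, h2.1, h2.2]
  have hlim1 : Tendsto (fun ε => Φ (c-ε) - Φ ε) (𝓝[>] (0:ℝ)) (𝓝 (Φ c - Φ 0)) := by
    apply Tendsto.mono_left _ nhdsWithin_le_nhds
    have h1 : Tendsto (fun ε : ℝ => c - ε) (𝓝 0) (𝓝 c) := by
      simpa using (tendsto_const_nhds.sub tendsto_id : Tendsto (fun ε : ℝ => c - ε) (𝓝 0) (𝓝 (c - 0)))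
    exact (((hΦ.tendsto c).comp h1).sub (hΦ.tendsto 0))
  have hlim2 : Tendsto (fun ε : ℝ => -(Real.pi * C^2 * ε)) (𝓝[>] (0:ℝ)) (𝓝 0) := by
    apply Tendsto.mono_left _ nhdsWithin_le_nhds
    have h2 : Tendsto (fun ε : ℝ => -(Real.pi * C^2 * ε)) (𝓝 0) (𝓝 (-(Real.pi * C^2 * 0))) :=
      (tendsto_const_nhds.mul tendsto_id).neg
    simpa using h2
  have hev : ∀ᶠ ε in 𝓝[>] (0:ℝ), -(Real.pi * C^2 * ε) ≤ Φ (c-ε) - Φ ε := by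
    filter_upwards [Ioc_mem_nhdsGT_of_mem (Set.left_mem_Ico.mpr (by positivity : (0:ℝ) < c/2))]
      with ε hε
    exact le_trans (hWbound ε hε.1 hε.2) (key ε hε.1 hε.2)
  have hfinal : (0:ℝ) ≤ Φ c - Φ 0 := le_of_tendsto_of_tendsto hlim2 hlim1 hev
  have hΦ0 : Φ 0 = 0 := by rw [hΦdef]; simp
  have hsub : Φ c = (∫ x in (0:ℝ)..c, (deriv u x)^2) - k^2 * ∫ x in (0:ℝ)..c, (u x)^2 := by
    rw [hΦdef]; simp only
    rw [hG]
    rw [intervalIntegral.integral_sub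
      ((by fun_prop : Continuous fun x => (deriv u x)^2).intervalIntegrable _ _)
      ((by fun_prop : Continuous fun x => k^2 * (u x)^2).intervalIntegrable _ _)]
    rw [intervalIntegral.integral_const_mul]
  rw [hΦ0, hsub] at hfinal
  linarith

end BilapAux

open Function BilapAux in
/-- Bilaplacian Poincaré inequality on the rectangle `D = (0,L)×(0,B)`. -/
theorem bilaplacian_poincare_rectangle (L B : ℝ) (hL : 0 < L) (hB : 0 < B)
    (f : ℝ → ℝ → ℝ) (hf : ContDiff ℝ 4 (Function.uncurry f))
    (hbx : ∀ y, f 0 y = 0 ∧ f L y = 0)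
    (hby : ∀ x, f x 0 = 0 ∧ f x B = 0)
    (hyy : ∀ x, iteratedDeriv 2 (f x) 0 = 0 ∧ iteratedDeriv 2 (f x) B = 0)
    (hx : ∀ y, deriv (fun x => f x y) 0 = 0 ∧ deriv (fun x => f x y) L = 0)
    (hxx : ∀ y, iteratedDeriv 2 (fun x => f x y) L = 0)
    (a : ℝ) (ha : a = Real.pi ^ 2 / L ^ 2 + Real.pi ^ 2 / B ^ 2) :
    a ^ 2 * (∫ p in Ioo 0 L ×ˢ Ioo 0 B, (lap f p.1 p.2) ^ 2) ≤
      ∫ p in Ioo 0 L ×ˢ Ioo 0 B, (lap (lap f) p.1 p.2) ^ 2 := by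
  -- smoothness of the partial derivatives
  have hf4 : ContDiff ℝ ((3:ℕ) + 1 : ℕ) (uncurry f) := by exact_mod_cast hf
  have hpxf : ContDiff ℝ (3:ℕ) (uncurry (px f)) := contDiff_px hf4
  have hpyf : ContDiff ℝ (3:ℕ) (uncurry (py f)) := contDiff_py hf4
  have hpxf' : ContDiff ℝ ((2:ℕ) + 1 : ℕ) (uncurry (px f)) := by exact_mod_cast hpxf
  have hpyf' : ContDiff ℝ ((2:ℕ) + 1 : ℕ) (uncurry (py f)) := by exact_mod_cast hpyf
  have hpxxf : ContDiff ℝ (2:ℕ) (uncurry (px (px f))) := contDiff_px hpxf'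
  have hpyyf : ContDiff ℝ (2:ℕ) (uncurry (py (py f))) := contDiff_py hpyf'
  have hlapf : ∀ x y, lap f x y = px (px f) x y + py (py f) x y :=
    fun x y => congrFun (congrFun (lap_eq f) x) y
  have hg2 : ContDiff ℝ (2:ℕ) (uncurry (lap f)) := by
    have he : uncurry (lap f) =
        fun p : ℝ × ℝ => uncurry (px (px f)) p + uncurry (py (py f)) p := by
      funext p; exact hlapf p.1 p.2
    rw [he]; exact hpxxf.add hpyyf
  have hg2' : ContDiff ℝ ((1:ℕ) + 1 : ℕ) (uncurry (lap f)) := by exact_mod_cast hg2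
  have hpxg : ContDiff ℝ (1:ℕ) (uncurry (px (lap f))) := contDiff_px hg2'
  have hpyg : ContDiff ℝ (1:ℕ) (uncurry (py (lap f))) := contDiff_py hg2'
  have hpxg' : ContDiff ℝ ((0:ℕ) + 1 : ℕ) (uncurry (px (lap f))) := by exact_mod_cast hpxg
  have hpyg' : ContDiff ℝ ((0:ℕ) + 1 : ℕ) (uncurry (py (lap f))) := by exact_mod_cast hpyg
  have hpxxg : ContDiff ℝ (0:ℕ) (uncurry (px (px (lap f)))) := contDiff_px hpxg'
  have hpyyg : ContDiff ℝ (0:ℕ) (uncurry (py (py (lap f)))) := contDiff_py hpyg'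
  have hll : ∀ x y, lap (lap f) x y = px (px (lap f)) x y + py (py (lap f)) x y :=
    fun x y => congrFun (congrFun (lap_eq (lap f)) x) y
  -- continuity
  have cf : Continuous (uncurry f) := hf.continuous
  have cpxf : Continuous (uncurry (px f)) := hpxf.continuous
  have cpyf : Continuous (uncurry (py f)) := hpyf.continuous
  have cpxxf : Continuous (uncurry (px (px f))) := hpxxf.continuous
  have cpyyf : Continuous (uncurry (py (py f))) := hpyyf.continuous
  have cg : Continuous (uncurry (lap f)) := hg2.continuous
  have cpxxg : Continuous (uncurry (px (px (lap f)))) := hpxxg.continuous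
  have cpyyg : Continuous (uncurry (py (py (lap f)))) := hpyyg.continuous
  have cll : Continuous (uncurry (lap (lap f))) := by
    have he : uncurry (lap (lap f)) =
        fun p : ℝ × ℝ => uncurry (px (px (lap f))) p + uncurry (py (py (lap f))) p := by
      funext p; exact hll p.1 p.2
    rw [he]; exact cpxxg.add cpyyg
  -- boundary values
  have hfy0 : ∀ x, f x 0 = 0 := fun x => (hby x).1
  have hfyB : ∀ x, f x B = 0 := fun x => (hby x).2
  have hfx0 : ∀ y, f 0 y = 0 := fun y => (hbx y).1
  have hfxL : ∀ y, f L y = 0 := fun y => (hbx y).2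
  have hpxf_y0 : ∀ x, px f x 0 = 0 := by
    intro x
    have he : (fun s => f s 0) = fun _ => (0:ℝ) := funext hfy0
    show deriv (fun s => f s 0) x = 0
    rw [he]; exact deriv_const x 0
  have hpxf_yB : ∀ x, px f x B = 0 := by
    intro x
    have he : (fun s => f s B) = fun _ => (0:ℝ) := funext hfyB
    show deriv (fun s => f s B) x = 0
    rw [he]; exact deriv_const x 0
  have hpxxf_y0 : ∀ x, px (px f) x 0 = 0 := by
    intro x
    have he : (fun s => px f s 0) = fun _ => (0:ℝ) := funext hpxf_y0
    show deriv (fun s => px f s 0) x = 0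
    rw [he]; exact deriv_const x 0
  have hpxxf_yB : ∀ x, px (px f) x B = 0 := by
    intro x
    have he : (fun s => px f s B) = fun _ => (0:ℝ) := funext hpxf_yB
    show deriv (fun s => px f s B) x = 0
    rw [he]; exact deriv_const x 0
  have hpyf_x0 : ∀ t, py f 0 t = 0 := by
    intro t
    have he : f 0 = fun _ => (0:ℝ) := funext hfx0
    show deriv (f 0) t = 0
    rw [he]; exact deriv_const t 0
  have hpyf_xL : ∀ t, py f L t = 0 := by
    intro t
    have he : f L = fun _ => (0:ℝ) := funext hfxL
    show deriv (f L) t = 0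
    rw [he]; exact deriv_const t 0
  have hpyyf_x0 : ∀ y, py (py f) 0 y = 0 := by
    intro y
    have he : py f 0 = fun _ => (0:ℝ) := funext hpyf_x0
    show deriv (py f 0) y = 0
    rw [he]; exact deriv_const y 0
  have hpyyf_xL : ∀ y, py (py f) L y = 0 := by
    intro y
    have he : py f L = fun _ => (0:ℝ) := funext hpyf_xL
    show deriv (py f L) y = 0
    rw [he]; exact deriv_const y 0
  have hpyyf_y0 : ∀ x, py (py f) x 0 = 0 := by
    intro x; have h := (hyy x).1; rw [iteratedDeriv_two] at h; exact h
  have hpyyf_yB : ∀ x, py (py f) x B = 0 := by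
    intro x; have h := (hyy x).2; rw [iteratedDeriv_two] at h; exact h
  have hpxf_x0 : ∀ y, px f 0 y = 0 := fun y => (hx y).1
  have hpxf_xL : ∀ y, px f L y = 0 := fun y => (hx y).2
  have hpxxf_xL : ∀ y, px (px f) L y = 0 := by
    intro y; have h := hxx y; rw [iteratedDeriv_two] at h; exact h
  -- boundary values of the laplacian
  have hg_y0 : ∀ x, lap f x 0 = 0 := fun x => by
    rw [hlapf, hpxxf_y0 x, hpyyf_y0 x]; ring
  have hg_yB : ∀ x, lap f x B = 0 := fun x => by
    rw [hlapf, hpxxf_yB x, hpyyf_yB x]; ring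
  have hg_xL : ∀ y, lap f L y = 0 := fun y => by
    rw [hlapf, hpxxf_xL y, hpyyf_xL y]; ring
  -- 1D integration-by-parts identities
  have hAx : ∀ y, (∫ x in (0:ℝ)..L, f x y * px (px (lap f)) x y)
      = ∫ x in (0:ℝ)..L, px (px f) x y * lap f x y := by
    intro y
    have hu : ContDiff ℝ 2 (fun x => f x y) := contDiff_slice_x (hf.of_le (by norm_num)) y
    have hv : ContDiff ℝ 2 (fun x => lap f x y) := by
      exact_mod_cast contDiff_slice_x hg2 y
    have hb1 : f L y * px (lap f) L y - f 0 y * px (lap f) 0 y = 0 := by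
      rw [hfxL y, hfx0 y]; ring
    have hb2 : px f L y * lap f L y - px f 0 y * lap f 0 y = 0 := by
      rw [hpxf_xL y, hpxf_x0 y]; ring
    exact ibp2 hu hv hb1 hb2
  have hAy : ∀ x, (∫ y in (0:ℝ)..B, f x y * py (py (lap f)) x y)
      = ∫ y in (0:ℝ)..B, py (py f) x y * lap f x y := by
    intro x
    have hu : ContDiff ℝ 2 (f x) := contDiff_slice_y (hf.of_le (by norm_num)) x
    have hv : ContDiff ℝ 2 (lap f x) := by
      exact_mod_cast contDiff_slice_y hg2 x
    have hb1 : f x B * py (lap f) x B - f x 0 * py (lap f) x 0 = 0 := by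
      rw [hfyB x, hfy0 x]; ring
    have hb2 : py f x B * lap f x B - py f x 0 * lap f x 0 = 0 := by
      rw [hg_yB x, hg_y0 x]; ring
    exact ibp2 hu hv hb1 hb2
  have hBx : ∀ y, (∫ x in (0:ℝ)..L, f x y * px (px f) x y)
      = - ∫ x in (0:ℝ)..L, (px f x y) ^ 2 := by
    intro y
    have hu : ContDiff ℝ 1 (fun x => f x y) := contDiff_slice_x (hf.of_le (by norm_num)) y
    have hv : ContDiff ℝ 1 (fun x => px f x y) := by
      exact_mod_cast (contDiff_slice_x hpxf y).of_le (by norm_num)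
    have hb : f L y * px f L y - f 0 y * px f 0 y = 0 := by
      rw [hfxL y, hfx0 y]; ring
    have h : ∫ x in (0:ℝ)..L, f x y * px (px f) x y
        = - ∫ x in (0:ℝ)..L, px f x y * px f x y := ibp1 hu hv hb
    rw [h]
    congr 1
    apply intervalIntegral.integral_congr
    intro x _
    exact (pow_two (px f x y)).symm
  have hBy : ∀ x, (∫ y in (0:ℝ)..B, f x y * py (py f) x y)
      = - ∫ y in (0:ℝ)..B, (py f x y) ^ 2 := by
    intro x
    have hu : ContDiff ℝ 1 (f x) := contDiff_slice_y (hf.of_le (by norm_num)) x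
    have hv : ContDiff ℝ 1 (py f x) := by
      exact_mod_cast (contDiff_slice_y hpyf x).of_le (by norm_num)
    have hb : f x B * py f x B - f x 0 * py f x 0 = 0 := by
      rw [hfyB x, hfy0 x]; ring
    have h : ∫ y in (0:ℝ)..B, f x y * py (py f) x y
        = - ∫ y in (0:ℝ)..B, py f x y * py f x y := ibp1 hu hv hb
    rw [h]
    congr 1
    apply intervalIntegral.integral_congr
    intro y _
    exact (pow_two (py f x y)).symm
  -- Green identity (A):  ∫ f Δ²f = ∫ (Δf)²
  have hA : ∫ p in Ioo 0 L ×ˢ Ioo 0 B, f p.1 p.2 * lap (lap f) p.1 p.2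
      = ∫ p in Ioo 0 L ×ˢ Ioo 0 B, (lap f p.1 p.2) ^ 2 := by
    have e0 : ∫ p in Ioo 0 L ×ˢ Ioo 0 B, f p.1 p.2 * lap (lap f) p.1 p.2
        = ∫ p in Ioo 0 L ×ˢ Ioo 0 B,
          (f p.1 p.2 * px (px (lap f)) p.1 p.2 + f p.1 p.2 * py (py (lap f)) p.1 p.2) := by
      apply setIntegral_congr_fun (measurableSet_Ioo.prod measurableSet_Ioo)
      intro p _
      show f p.1 p.2 * lap (lap f) p.1 p.2
        = f p.1 p.2 * px (px (lap f)) p.1 p.2 + f p.1 p.2 * py (py (lap f)) p.1 p.2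
      rw [hll p.1 p.2]; ring
    have e1 : ∫ p in Ioo 0 L ×ˢ Ioo 0 B,
          (f p.1 p.2 * px (px (lap f)) p.1 p.2 + f p.1 p.2 * py (py (lap f)) p.1 p.2)
        = (∫ p in Ioo 0 L ×ˢ Ioo 0 B, f p.1 p.2 * px (px (lap f)) p.1 p.2)
          + ∫ p in Ioo 0 L ×ˢ Ioo 0 B, f p.1 p.2 * py (py (lap f)) p.1 p.2 :=
      integral_add (intgD (F := fun x y => f x y * px (px (lap f)) x y) hL hB (cf.mul cpxxg)) (intgD (F := fun x y => f x y * py (py (lap f)) x y) hL hB (cf.mul cpyyg))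
    have e2 : ∫ p in Ioo 0 L ×ˢ Ioo 0 B, f p.1 p.2 * px (px (lap f)) p.1 p.2
        = ∫ p in Ioo 0 L ×ˢ Ioo 0 B, px (px f) p.1 p.2 * lap f p.1 p.2 := by
      have e2a : ∫ p in Ioo 0 L ×ˢ Ioo 0 B, f p.1 p.2 * px (px (lap f)) p.1 p.2
          = ∫ y in (0:ℝ)..B, ∫ x in (0:ℝ)..L, f x y * px (px (lap f)) x y :=
        fub_yx (F := fun x y => f x y * px (px (lap f)) x y) hL hB (cf.mul cpxxg)
      have e2b : ∫ y in (0:ℝ)..B, ∫ x in (0:ℝ)..L, f x y * px (px (lap f)) x y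
          = ∫ y in (0:ℝ)..B, ∫ x in (0:ℝ)..L, px (px f) x y * lap f x y :=
        intervalIntegral.integral_congr fun y _ => hAx y
      have e2c : ∫ p in Ioo 0 L ×ˢ Ioo 0 B, px (px f) p.1 p.2 * lap f p.1 p.2
          = ∫ y in (0:ℝ)..B, ∫ x in (0:ℝ)..L, px (px f) x y * lap f x y :=
        fub_yx (F := fun x y => px (px f) x y * lap f x y) hL hB (cpxxf.mul cg)
      rw [e2a, e2b, ← e2c]
    have e3 : ∫ p in Ioo 0 L ×ˢ Ioo 0 B, f p.1 p.2 * py (py (lap f)) p.1 p.2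
        = ∫ p in Ioo 0 L ×ˢ Ioo 0 B, py (py f) p.1 p.2 * lap f p.1 p.2 := by
      have e3a : ∫ p in Ioo 0 L ×ˢ Ioo 0 B, f p.1 p.2 * py (py (lap f)) p.1 p.2
          = ∫ x in (0:ℝ)..L, ∫ y in (0:ℝ)..B, f x y * py (py (lap f)) x y :=
        fub_xy (F := fun x y => f x y * py (py (lap f)) x y) hL hB (cf.mul cpyyg)
      have e3b : ∫ x in (0:ℝ)..L, ∫ y in (0:ℝ)..B, f x y * py (py (lap f)) x y
          = ∫ x in (0:ℝ)..L, ∫ y in (0:ℝ)..B, py (py f) x y * lap f x y :=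
        intervalIntegral.integral_congr fun x _ => hAy x
      have e3c : ∫ p in Ioo 0 L ×ˢ Ioo 0 B, py (py f) p.1 p.2 * lap f p.1 p.2
          = ∫ x in (0:ℝ)..L, ∫ y in (0:ℝ)..B, py (py f) x y * lap f x y :=
        fub_xy (F := fun x y => py (py f) x y * lap f x y) hL hB (cpyyf.mul cg)
      rw [e3a, e3b, ← e3c]
    have e4 : (∫ p in Ioo 0 L ×ˢ Ioo 0 B, px (px f) p.1 p.2 * lap f p.1 p.2)
          + ∫ p in Ioo 0 L ×ˢ Ioo 0 B, py (py f) p.1 p.2 * lap f p.1 p.2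
        = ∫ p in Ioo 0 L ×ˢ Ioo 0 B,
          (px (px f) p.1 p.2 * lap f p.1 p.2 + py (py f) p.1 p.2 * lap f p.1 p.2) :=
      (integral_add (intgD (F := fun x y => px (px f) x y * lap f x y) hL hB (cpxxf.mul cg)) (intgD (F := fun x y => py (py f) x y * lap f x y) hL hB (cpyyf.mul cg))).symm
    have e5 : ∫ p in Ioo 0 L ×ˢ Ioo 0 B,
          (px (px f) p.1 p.2 * lap f p.1 p.2 + py (py f) p.1 p.2 * lap f p.1 p.2)
        = ∫ p in Ioo 0 L ×ˢ Ioo 0 B, (lap f p.1 p.2) ^ 2 := by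
      apply setIntegral_congr_fun (measurableSet_Ioo.prod measurableSet_Ioo)
      intro p _
      show px (px f) p.1 p.2 * lap f p.1 p.2 + py (py f) p.1 p.2 * lap f p.1 p.2
        = (lap f p.1 p.2) ^ 2
      rw [hlapf p.1 p.2]; ring
    rw [e0, e1, e2, e3, e4, e5]
  -- Green identity (B):  ∫ f Δf = -∫ |∇f|²
  have hBB : ∫ p in Ioo 0 L ×ˢ Ioo 0 B, f p.1 p.2 * lap f p.1 p.2
      = - (∫ p in Ioo 0 L ×ˢ Ioo 0 B, (px f p.1 p.2) ^ 2)
        - ∫ p in Ioo 0 L ×ˢ Ioo 0 B, (py f p.1 p.2) ^ 2 := by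
    have e0 : ∫ p in Ioo 0 L ×ˢ Ioo 0 B, f p.1 p.2 * lap f p.1 p.2
        = ∫ p in Ioo 0 L ×ˢ Ioo 0 B,
          (f p.1 p.2 * px (px f) p.1 p.2 + f p.1 p.2 * py (py f) p.1 p.2) := by
      apply setIntegral_congr_fun (measurableSet_Ioo.prod measurableSet_Ioo)
      intro p _
      show f p.1 p.2 * lap f p.1 p.2
        = f p.1 p.2 * px (px f) p.1 p.2 + f p.1 p.2 * py (py f) p.1 p.2
      rw [hlapf p.1 p.2]; ring
    have e1 : ∫ p in Ioo 0 L ×ˢ Ioo 0 B,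
          (f p.1 p.2 * px (px f) p.1 p.2 + f p.1 p.2 * py (py f) p.1 p.2)
        = (∫ p in Ioo 0 L ×ˢ Ioo 0 B, f p.1 p.2 * px (px f) p.1 p.2)
          + ∫ p in Ioo 0 L ×ˢ Ioo 0 B, f p.1 p.2 * py (py f) p.1 p.2 :=
      integral_add (intgD (F := fun x y => f x y * px (px f) x y) hL hB (cf.mul cpxxf)) (intgD (F := fun x y => f x y * py (py f) x y) hL hB (cf.mul cpyyf))
    have e2 : ∫ p in Ioo 0 L ×ˢ Ioo 0 B, f p.1 p.2 * px (px f) p.1 p.2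
        = - ∫ p in Ioo 0 L ×ˢ Ioo 0 B, (px f p.1 p.2) ^ 2 := by
      have e2a : ∫ p in Ioo 0 L ×ˢ Ioo 0 B, f p.1 p.2 * px (px f) p.1 p.2
          = ∫ y in (0:ℝ)..B, ∫ x in (0:ℝ)..L, f x y * px (px f) x y :=
        fub_yx (F := fun x y => f x y * px (px f) x y) hL hB (cf.mul cpxxf)
      have e2b : ∫ y in (0:ℝ)..B, ∫ x in (0:ℝ)..L, f x y * px (px f) x y
          = ∫ y in (0:ℝ)..B, - ∫ x in (0:ℝ)..L, (px f x y) ^ 2 :=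
        intervalIntegral.integral_congr fun y _ => hBx y
      have e2c : ∫ p in Ioo 0 L ×ˢ Ioo 0 B, (px f p.1 p.2) ^ 2
          = ∫ y in (0:ℝ)..B, ∫ x in (0:ℝ)..L, (px f x y) ^ 2 :=
        fub_yx (F := fun x y => (px f x y) ^ 2) hL hB (cpxf.pow 2)
      rw [e2a, e2b, intervalIntegral.integral_neg, e2c]
    have e3 : ∫ p in Ioo 0 L ×ˢ Ioo 0 B, f p.1 p.2 * py (py f) p.1 p.2
        = - ∫ p in Ioo 0 L ×ˢ Ioo 0 B, (py f p.1 p.2) ^ 2 := by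
      have e3a : ∫ p in Ioo 0 L ×ˢ Ioo 0 B, f p.1 p.2 * py (py f) p.1 p.2
          = ∫ x in (0:ℝ)..L, ∫ y in (0:ℝ)..B, f x y * py (py f) x y :=
        fub_xy (F := fun x y => f x y * py (py f) x y) hL hB (cf.mul cpyyf)
      have e3b : ∫ x in (0:ℝ)..L, ∫ y in (0:ℝ)..B, f x y * py (py f) x y
          = ∫ x in (0:ℝ)..L, - ∫ y in (0:ℝ)..B, (py f x y) ^ 2 :=
        intervalIntegral.integral_congr fun x _ => hBy x
      have e3c : ∫ p in Ioo 0 L ×ˢ Ioo 0 B, (py f p.1 p.2) ^ 2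
          = ∫ x in (0:ℝ)..L, ∫ y in (0:ℝ)..B, (py f x y) ^ 2 :=
        fub_xy (F := fun x y => (py f x y) ^ 2) hL hB (cpyf.pow 2)
      rw [e3a, e3b, intervalIntegral.integral_neg, e3c]
    rw [e0, e1, e2, e3]
    ring
  -- Poincaré (C): a ∫ f² ≤ ∫ |∇f|²
  have hCx : Real.pi ^ 2 / L ^ 2 * ∫ p in Ioo 0 L ×ˢ Ioo 0 B, (f p.1 p.2) ^ 2
      ≤ ∫ p in Ioo 0 L ×ˢ Ioo 0 B, (px f p.1 p.2) ^ 2 := by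
    have e1 : ∫ p in Ioo 0 L ×ˢ Ioo 0 B, (f p.1 p.2) ^ 2
        = ∫ y in (0:ℝ)..B, ∫ x in (0:ℝ)..L, (f x y) ^ 2 := fub_yx (F := fun x y => (f x y) ^ 2) hL hB (cf.pow 2)
    have e2 : ∫ p in Ioo 0 L ×ˢ Ioo 0 B, (px f p.1 p.2) ^ 2
        = ∫ y in (0:ℝ)..B, ∫ x in (0:ℝ)..L, (px f x y) ^ 2 := fub_yx (F := fun x y => (px f x y) ^ 2) hL hB (cpxf.pow 2)
    rw [e1, e2, ← intervalIntegral.integral_const_mul]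
    apply intervalIntegral.integral_mono_on hB.le
      ((marg_y (F := fun x y => (f x y) ^ 2) hL hB (by exact cf.pow 2)).const_mul _) (marg_y (F := fun x y => (px f x y) ^ 2) hL hB (by exact cpxf.pow 2))
    intro y _
    have hw := wirtinger1d hL
      (by exact_mod_cast contDiff_slice_x (hf.of_le (by norm_num)) y
        : ContDiff ℝ 1 (fun x => f x y)) (hfx0 y) (hfxL y)
    rw [div_pow] at hw
    exact hw
  have hCy : Real.pi ^ 2 / B ^ 2 * ∫ p in Ioo 0 L ×ˢ Ioo 0 B, (f p.1 p.2) ^ 2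
      ≤ ∫ p in Ioo 0 L ×ˢ Ioo 0 B, (py f p.1 p.2) ^ 2 := by
    have e1 : ∫ p in Ioo 0 L ×ˢ Ioo 0 B, (f p.1 p.2) ^ 2
        = ∫ x in (0:ℝ)..L, ∫ y in (0:ℝ)..B, (f x y) ^ 2 := fub_xy (F := fun x y => (f x y) ^ 2) hL hB (cf.pow 2)
    have e2 : ∫ p in Ioo 0 L ×ˢ Ioo 0 B, (py f p.1 p.2) ^ 2
        = ∫ x in (0:ℝ)..L, ∫ y in (0:ℝ)..B, (py f x y) ^ 2 := fub_xy (F := fun x y => (py f x y) ^ 2) hL hB (cpyf.pow 2)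
    rw [e1, e2, ← intervalIntegral.integral_const_mul]
    apply intervalIntegral.integral_mono_on hL.le
      ((marg_x (F := fun x y => (f x y) ^ 2) hL hB (by exact cf.pow 2)).const_mul _) (marg_x (F := fun x y => (py f x y) ^ 2) hL hB (by exact cpyf.pow 2))
    intro x _
    have hw := wirtinger1d hB
      (by exact_mod_cast contDiff_slice_y (hf.of_le (by norm_num)) x
        : ContDiff ℝ 1 (f x)) (hfy0 x) (hfyB x)
    rw [div_pow] at hw
    exact hw
  -- Cauchy–Schwarz
  have hCS1 : (∫ p in Ioo 0 L ×ˢ Ioo 0 B, f p.1 p.2 * lap f p.1 p.2) ^ 2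
      ≤ (∫ p in Ioo 0 L ×ˢ Ioo 0 B, (f p.1 p.2) ^ 2)
        * ∫ p in Ioo 0 L ×ˢ Ioo 0 B, (lap f p.1 p.2) ^ 2 :=
    integral_CS _ (intgD (F := fun x y => (f x y) ^ 2) hL hB (cf.pow 2)) (intgD (F := fun x y => (lap f x y) ^ 2) hL hB (cg.pow 2)) (intgD (F := fun x y => f x y * lap f x y) hL hB (cf.mul cg))
  have hCS2 : (∫ p in Ioo 0 L ×ˢ Ioo 0 B, f p.1 p.2 * lap (lap f) p.1 p.2) ^ 2
      ≤ (∫ p in Ioo 0 L ×ˢ Ioo 0 B, (f p.1 p.2) ^ 2)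
        * ∫ p in Ioo 0 L ×ˢ Ioo 0 B, (lap (lap f) p.1 p.2) ^ 2 :=
    integral_CS _ (intgD (F := fun x y => (f x y) ^ 2) hL hB (cf.pow 2)) (intgD (F := fun x y => (lap (lap f) x y) ^ 2) hL hB (cll.pow 2)) (intgD (F := fun x y => f x y * lap (lap f) x y) hL hB (cf.mul cll))
  -- nonnegativity
  have hF10 : (0:ℝ) ≤ ∫ p in Ioo 0 L ×ˢ Ioo 0 B, (f p.1 p.2) ^ 2 :=
    integral_nonneg fun p => sq_nonneg _
  have hP0 : (0:ℝ) ≤ ∫ p in Ioo 0 L ×ˢ Ioo 0 B, (lap f p.1 p.2) ^ 2 :=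
    integral_nonneg fun p => sq_nonneg _
  have hQ0 : (0:ℝ) ≤ ∫ p in Ioo 0 L ×ˢ Ioo 0 B, (lap (lap f) p.1 p.2) ^ 2 :=
    integral_nonneg fun p => sq_nonneg _
  have ha0 : 0 < a := by rw [ha]; positivity
  -- final algebra
  set F1 := ∫ p in Ioo 0 L ×ˢ Ioo 0 B, (f p.1 p.2) ^ 2 with hF1def
  set P := ∫ p in Ioo 0 L ×ˢ Ioo 0 B, (lap f p.1 p.2) ^ 2 with hPdef
  set Q := ∫ p in Ioo 0 L ×ˢ Ioo 0 B, (lap (lap f) p.1 p.2) ^ 2 with hQdef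
  set Nx := ∫ p in Ioo 0 L ×ˢ Ioo 0 B, (px f p.1 p.2) ^ 2 with hNxdef
  set Ny := ∫ p in Ioo 0 L ×ˢ Ioo 0 B, (py f p.1 p.2) ^ 2 with hNydef
  clear_value F1 P Q Nx Ny
  have hC : a * F1 ≤ Nx + Ny := by
    rw [ha, add_mul]
    exact add_le_add hCx hCy
  have hS2 : (Nx + Ny) ^ 2 ≤ F1 * P := by
    have h1 : (∫ p in Ioo 0 L ×ˢ Ioo 0 B, f p.1 p.2 * lap f p.1 p.2) ^ 2
        = (Nx + Ny) ^ 2 := by rw [hBB]; ring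
    linarith [h1 ▸ hCS1]
  have hT2 : P ^ 2 ≤ F1 * Q := by
    rw [hA] at hCS2; exact hCS2
  rcases eq_or_lt_of_le hF10 with hF1z | hF1p
  · have hPz : P ^ 2 ≤ 0 := by rw [← hF1z] at hT2; linarith [hT2]
    have : P = 0 := by nlinarith only [hPz, hP0, sq_nonneg P]
    rw [this]
    simpa using hQ0
  · have h2 : a ^ 2 * F1 ^ 2 ≤ F1 * P := by
      nlinarith only [hC, hS2, mul_nonneg ha0.le hF10]
    have h3 : a ^ 2 * F1 ≤ P := by nlinarith only [h2, hF1p]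
    have h5 : F1 * (a ^ 2 * P) ≤ F1 * Q := by
      nlinarith only [mul_le_mul_of_nonneg_right h3 hP0, hT2]
    exact le_of_mul_le_mul_left h5 hF1p
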